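/- Let n ≥ 1 and ω* ≥ 1 be integers, and let n_s divide n with n_s ≥ 2ω*−1. Fix r_0 ∈ {0,…,n−1} and set r_i = (r_0 + i·(n/n_s)) mod n for i = 0,…,n_s−1 (n_s equally spaced sample points). Then for every x ∈ S_{ω*} one has Σ_{i=0}^{n_s−1} x_{r_i}² = (n_s/n)·Σ_{j=0}^{n−1} x_j². Consequently, for any x¹, x² ∈ S_{ω*} with x² ≠ 0, the ratio ‖x¹‖₂/‖x²‖₂ equals the ratio of the Euclidean norms of the corresponding sampled vectors (x¹_{r_0},…,x¹_{r_{n_s−1}}) and (x²_{r_0},…,x²_{r_{n_s−1}}). -/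

import Mathlib

open scoped BigOperators

noncomputable section

/-- Low-frequency index set `K_ω ⊆ {0,…,n−1}`. -/
def Kset (n ω : ℕ) : Set (Fin n) := {k | (k : ℕ) ≤ ω - 1 ∨ n - ω + 1 ≤ (k : ℕ)}

/-- The set of ω-bandlimited real vectors `S_ω`. -/
def Sband (n ω : ℕ) : Set (EuclideanSpace ℝ (Fin n)) :=
  {x | ∀ k : Fin n, k ∉ Kset n ω →
    ∑ j : Fin n, (x j : ℂ) *
      Complex.exp (-(2 * (Real.pi : ℂ) * Complex.I * ((j : ℕ) : ℂ) * ((k : ℕ) : ℂ)) / (n : ℂ)) = 0}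

open Finset

lemma key_arith (n ns ω k k' : ℕ) (hn : 1 ≤ n) (hω : 1 ≤ ω) (hdvd : ns ∣ n)
    (hns : 2 * ω - 1 ≤ ns) (hk : k < n) (hk' : k' < n)
    (hkK : k ≤ ω - 1 ∨ n - ω + 1 ≤ k) (hk'K : k' ≤ ω - 1 ∨ n - ω + 1 ≤ k')
    (hd : ns ∣ (k + k')) : (k + k') % n = 0 := by
  have hns0 : 0 < ns := by
    rcases Nat.eq_zero_or_pos ns with h | h
    · subst h; simp at hdvd; omega
    · exact h
  have hnsn : ns ≤ n := Nat.le_of_dvd (by omega) hdvd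
  rcases hkK with h1 | h1 <;> rcases hk'K with h2 | h2
  · have h3 : k + k' = 0 := Nat.eq_zero_of_dvd_of_lt hd (by omega)
    simp [h3]
  · -- mixed: k low, k' high; show k + k' = n
    have hsn : k + k' = n := by
      rcases le_total (k + k') n with hle | hle
      · have h3 : ns ∣ n - (k + k') := Nat.dvd_sub hdvd hd
        have h4 : n - (k + k') = 0 := Nat.eq_zero_of_dvd_of_lt h3 (by omega)
        omega
      · have h3 : ns ∣ (k + k') - n := Nat.dvd_sub hd hdvd
        have h4 : (k + k') - n = 0 := Nat.eq_zero_of_dvd_of_lt h3 (by omega)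
        omega
    simp [hsn]
  · have hsn : k + k' = n := by
      rcases le_total (k + k') n with hle | hle
      · have h3 : ns ∣ n - (k + k') := Nat.dvd_sub hdvd hd
        have h4 : n - (k + k') = 0 := Nat.eq_zero_of_dvd_of_lt h3 (by omega)
        omega
      · have h3 : ns ∣ (k + k') - n := Nat.dvd_sub hd hdvd
        have h4 : (k + k') - n = 0 := Nat.eq_zero_of_dvd_of_lt h3 (by omega)
        omega
    simp [hsn]
  · exfalso
    have h3 : ns ∣ (k + k') - n := Nat.dvd_sub hd hdvd
    have h4 : ns ∣ n - ((k + k') - n) := Nat.dvd_sub hdvd h3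
    have h5 : n - ((k + k') - n) = 0 := Nat.eq_zero_of_dvd_of_lt h4 (by omega)
    omega


noncomputable def dftc (n : ℕ) (x : Fin n → ℝ) (k : Fin n) : ℂ :=
  ∑ j : Fin n, (x j : ℂ) * ((Complex.exp (2 * Real.pi * Complex.I / n)) ^ ((j : ℕ) * (k : ℕ)))⁻¹

lemma sum_pow_root {N : ℕ} (z : ℂ) (hz : z ^ N = 1) :
    ∑ i : Fin N, z ^ (i : ℕ) = if z = 1 then (N : ℂ) else 0 := by
  rw [Fin.sum_univ_eq_sum_range]
  split_ifs with h
  · simp [h]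
  · rw [geom_sum_eq h, hz]; simp

lemma sample_energy (n N : ℕ) [NeZero n] (hn : 1 ≤ n) (hd : N ∣ n) (hN : 1 ≤ N)
    (ρ0 : ℕ) (ρ : Fin N → Fin n)
    (hρ : ∀ i, (ρ i : ℕ) = (ρ0 + (i : ℕ) * (n / N)) % n) (x : Fin n → ℝ)
    (hband : ∀ k k' : Fin n, dftc n x k ≠ 0 → dftc n x k' ≠ 0 →
      N ∣ ((k : ℕ) + (k' : ℕ)) → ((k : ℕ) + (k' : ℕ)) % n = 0) :
    (∑ i : Fin N, (x (ρ i) : ℂ) ^ 2) =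
      ((N : ℂ) / (n : ℂ) ^ 2) * ∑ k : Fin n, dftc n x k * dftc n x (-k) := by
  set ζ : ℂ := Complex.exp (2 * Real.pi * Complex.I / n) with hζdef
  have hprim : IsPrimitiveRoot ζ n := Complex.isPrimitiveRoot_exp n (by omega)
  have hζ0 : ζ ≠ 0 := Complex.exp_ne_zero _
  have hζn : ζ ^ n = 1 := hprim.pow_eq_one
  have hn0 : (n : ℂ) ≠ 0 := Nat.cast_ne_zero.mpr (by omega)
  set m : ℕ := n / N with hm
  have hnm : N * m = n := Nat.mul_div_cancel' hd
  have hm0 : 0 < m := Nat.div_pos (Nat.le_of_dvd (by omega) hd) (by omega)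
  -- periodicity
  have hperiod : ∀ a : ℕ, ζ ^ (a % n) = ζ ^ a := by
    intro a
    conv_rhs => rw [← Nat.div_add_mod a n]
    rw [pow_add, pow_mul, hζn, one_pow, one_mul]
  -- orthogonality
  have horth : ∀ j l : Fin n,
      ∑ k : Fin n, ((ζ ^ (l : ℕ))⁻¹ * ζ ^ (j : ℕ)) ^ (k : ℕ)
        = if j = l then (n : ℂ) else 0 := by
    intro j l
    rw [sum_pow_root]
    · congr 1
      simp only [eq_iff_iff]
      rw [inv_mul_eq_one₀ (pow_ne_zero _ hζ0)]
      constructor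
      · intro h
        exact (Fin.ext (hprim.pow_inj l.isLt j.isLt h)).symm
      · rintro rfl; rfl
    · rw [mul_pow, inv_pow, ← pow_mul, ← pow_mul,
        mul_comm (l : ℕ) n, mul_comm (j : ℕ) n, pow_mul, pow_mul, hζn, one_pow, one_pow]
      simp
  -- inversion
  have hinv : ∀ j : Fin n, (x j : ℂ) = (1 / n) * ∑ k : Fin n, dftc n x k * ζ ^ ((j : ℕ) * (k : ℕ)) := by
    intro j
    have : ∑ k : Fin n, dftc n x k * ζ ^ ((j : ℕ) * (k : ℕ)) = (n : ℂ) * x j := by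
      simp only [dftc, Finset.sum_mul]
      rw [Finset.sum_comm]
      have : ∀ l : Fin n,
          ∑ k : Fin n, (x l : ℂ) * (ζ ^ ((l : ℕ) * (k : ℕ)))⁻¹ * ζ ^ ((j : ℕ) * (k : ℕ))
            = (x l : ℂ) * (if j = l then (n : ℂ) else 0) := by
        intro l
        rw [← horth j l, Finset.mul_sum]
        congr 1; ext k
        rw [mul_pow, inv_pow, ← pow_mul, ← pow_mul, mul_assoc]
      rw [Finset.sum_congr rfl fun l _ => this l]
      simp only [mul_ite, mul_zero]
      rw [Finset.sum_ite_eq univ j (fun l => (x l : ℂ) * n)]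
      simp [mul_comm]
    rw [this]
    field_simp
  -- characterize (k+k') % n = 0
  have hchar : ∀ k k' : Fin n, ((k : ℕ) + (k' : ℕ)) % n = 0 ↔ k' = -k := by
    intro k k'
    have hneg : ((-k : Fin n) : ℕ) = (n - (k : ℕ)) % n := rfl
    constructor
    · intro h
      have hdv : n ∣ (k : ℕ) + (k' : ℕ) := Nat.dvd_of_mod_eq_zero h
      rcases hdv with ⟨c, hc⟩
      have hk := k.isLt
      have hk' := k'.isLt
      have hc2 : c = 0 ∨ c = 1 := by
        by_contra hcc
        push_neg at hcc
        have h2 : 2 ≤ c := by omega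
        have : n * 2 ≤ n * c := Nat.mul_le_mul_left n h2
        omega
      rcases hc2 with rfl | rfl
      · apply Fin.ext
        have hk0 : (k : ℕ) = 0 := by omega
        have hk'0 : (k' : ℕ) = 0 := by omega
        rw [hk'0, hneg, hk0]
        simp
      · apply Fin.ext
        have hk1 : 1 ≤ (k : ℕ) := by omega
        rw [hneg, Nat.mod_eq_of_lt (show n - (k : ℕ) < n by omega)]
        omega
    · rintro rfl
      rw [hneg]
      rcases Nat.eq_zero_or_pos (k : ℕ) with h0 | h0
      · rw [h0]
        simp
      · rw [Nat.mod_eq_of_lt (show n - (k : ℕ) < n by omega)]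
        have hE : (k : ℕ) + (n - (k : ℕ)) = n := by
          have := k.isLt; omega
        rw [hE, Nat.mod_self]
  -- sum over sample points of the exponential
  have hGi : ∀ k k' : Fin n,
      ∑ i : Fin N, ζ ^ ((ρ i : ℕ) * ((k : ℕ) + (k' : ℕ)))
        = ζ ^ (ρ0 * ((k : ℕ) + (k' : ℕ))) *
            (if N ∣ ((k : ℕ) + (k' : ℕ)) then (N : ℂ) else 0) := by
    intro k k'
    set s : ℕ := (k : ℕ) + (k' : ℕ) with hs
    have hterm : ∀ i : Fin N, ζ ^ ((ρ i : ℕ) * s) = ζ ^ (ρ0 * s) * (ζ ^ (m * s)) ^ (i : ℕ) := by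
      intro i
      have h1 : ζ ^ ((ρ i : ℕ) * s) = ζ ^ ((ρ0 + (i : ℕ) * m) * s) := by
        rw [hρ i]
        rw [← hperiod (((ρ0 + (i : ℕ) * m) % n) * s), ← hperiod ((ρ0 + (i : ℕ) * m) * s)]
        congr 1
        conv_rhs => rw [Nat.mul_mod]
        conv_lhs => rw [Nat.mul_mod, Nat.mod_mod_of_dvd _ (dvd_refl n)]
      rw [h1, add_mul, pow_add, ← pow_mul]
      ring_nf
    rw [Finset.sum_congr rfl fun i _ => hterm i, ← Finset.mul_sum]
    congr 1
    have hwN : (ζ ^ (m * s)) ^ N = 1 := by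
      rw [← pow_mul]
      have : m * s * N = n * s := by rw [mul_comm (m * s) N, ← mul_assoc, hnm]
      rw [this, pow_mul, hζn, one_pow]
    rw [sum_pow_root _ hwN]
    congr 1
    simp only [eq_iff_iff]
    rw [hprim.pow_eq_one_iff_dvd]
    constructor
    · intro h
      rcases h with ⟨c, hc⟩
      refine ⟨c, ?_⟩
      have : m * s = m * (N * c) := by rw [hc, ← hnm]; ring
      exact Nat.eq_of_mul_eq_mul_left hm0 this
    · rintro ⟨c, hc⟩
      exact ⟨c, by rw [hc, ← hnm]; ring⟩
  -- per-term simplification using the band hypothesis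
  have hterm2 : ∀ k k' : Fin n,
      dftc n x k * dftc n x k' *
        (ζ ^ (ρ0 * ((k : ℕ) + (k' : ℕ))) *
          (if N ∣ ((k : ℕ) + (k' : ℕ)) then (N : ℂ) else 0))
      = dftc n x k * dftc n x k' *
          (if ((k : ℕ) + (k' : ℕ)) % n = 0 then (N : ℂ) else 0) := by
    intro k k'
    by_cases hxk : dftc n x k = 0
    · simp [hxk]
    by_cases hxk' : dftc n x k' = 0
    · simp [hxk']
    by_cases hNd : N ∣ ((k : ℕ) + (k' : ℕ))
    · have hs0 : ((k : ℕ) + (k' : ℕ)) % n = 0 := hband _ _ hxk hxk' hNd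
      have hz1 : ζ ^ (ρ0 * ((k : ℕ) + (k' : ℕ))) = 1 := by
        rw [mul_comm ρ0, pow_mul]
        have : ζ ^ ((k : ℕ) + (k' : ℕ)) = 1 := by
          rw [← hperiod, hs0, pow_zero]
        rw [this, one_pow]
      simp [hNd, hs0, hz1]
    · have hmod : ¬ ((k : ℕ) + (k' : ℕ)) % n = 0 := fun h =>
        hNd (dvd_trans hd (Nat.dvd_of_mod_eq_zero h))
      simp [hNd, hmod]
  -- main computation
  calc ∑ i : Fin N, (x (ρ i) : ℂ) ^ 2
      = ∑ i : Fin N, (1 / (n : ℂ)) ^ 2 * ∑ k : Fin n, ∑ k' : Fin n,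
          dftc n x k * dftc n x k' * ζ ^ ((ρ i : ℕ) * ((k : ℕ) + (k' : ℕ))) := by
        refine Finset.sum_congr rfl fun i _ => ?_
        rw [hinv (ρ i), mul_pow,
          pow_two (∑ k : Fin n, dftc n x k * ζ ^ ((ρ i : ℕ) * (k : ℕ))), Finset.sum_mul_sum]
        congr 1
        refine Finset.sum_congr rfl fun k _ => ?_
        refine Finset.sum_congr rfl fun k' _ => ?_
        rw [Nat.mul_add, pow_add]
        ring
    _ = (1 / (n : ℂ)) ^ 2 * ∑ k : Fin n, ∑ k' : Fin n,
          dftc n x k * dftc n x k' * ∑ i : Fin N, ζ ^ ((ρ i : ℕ) * ((k : ℕ) + (k' : ℕ))) := by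
        rw [← Finset.mul_sum]
        congr 1
        rw [Finset.sum_comm]
        refine Finset.sum_congr rfl fun k _ => ?_
        rw [Finset.sum_comm]
        refine Finset.sum_congr rfl fun k' _ => ?_
        rw [← Finset.mul_sum]
    _ = (1 / (n : ℂ)) ^ 2 * ∑ k : Fin n, ∑ k' : Fin n,
          dftc n x k * dftc n x k' *
            (if ((k : ℕ) + (k' : ℕ)) % n = 0 then (N : ℂ) else 0) := by
        congr 1
        refine Finset.sum_congr rfl fun k _ => ?_
        refine Finset.sum_congr rfl fun k' _ => ?_
        rw [hGi k k', hterm2 k k']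
    _ = (1 / (n : ℂ)) ^ 2 * ∑ k : Fin n, dftc n x k * dftc n x (-k) * (N : ℂ) := by
        congr 1
        refine Finset.sum_congr rfl fun k _ => ?_
        have : ∀ k' : Fin n,
            dftc n x k * dftc n x k' *
              (if ((k : ℕ) + (k' : ℕ)) % n = 0 then (N : ℂ) else 0)
            = if k' = -k then dftc n x k * dftc n x k' * (N : ℂ) else 0 := by
          intro k'
          by_cases h : k' = -k
          · rw [if_pos h, if_pos ((hchar k k').mpr h)]
          · rw [if_neg h, if_neg (fun hc => h ((hchar k k').mp hc)), mul_zero]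
        rw [Finset.sum_congr rfl fun k' _ => this k']
        rw [Finset.sum_ite_eq' univ (-k) (fun k' => dftc n x k * dftc n x k' * (N : ℂ))]
        simp
    _ = ((N : ℂ) / (n : ℂ) ^ 2) * ∑ k : Fin n, dftc n x k * dftc n x (-k) := by
        rw [Finset.mul_sum, Finset.mul_sum]
        refine Finset.sum_congr rfl fun k _ => ?_
        ring

/-- for `n_s ∣ n`, `n_s ≥ 2ω*−1` equally spaced sample points,
sampling preserves energy up to the factor `n_s/n`, and hence preserves norm ratios of
bandlimited vectors. -/
theorem equispaced_sampling_energy_and_norm_ratio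
    (n ωs ns : ℕ) (hn : 1 ≤ n) (hω : 1 ≤ ωs) (hdvd : ns ∣ n) (hns : 2 * ωs - 1 ≤ ns)
    (r0 : ℕ) (hr0 : r0 < n) (r : Fin ns → Fin n)
    (hr : ∀ i : Fin ns, (r i : ℕ) = (r0 + (i : ℕ) * (n / ns)) % n) :
    (∀ x ∈ Sband n ωs,
      ∑ i : Fin ns, (x (r i)) ^ 2 = ((ns : ℝ) / (n : ℝ)) * ∑ j : Fin n, (x j) ^ 2) ∧
    (∀ x₁ ∈ Sband n ωs, ∀ x₂ ∈ Sband n ωs, x₂ ≠ 0 →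
      ‖x₁‖ / ‖x₂‖ =
        ‖(WithLp.equiv 2 (Fin ns → ℝ)).symm (fun i => x₁ (r i))‖ /
        ‖(WithLp.equiv 2 (Fin ns → ℝ)).symm (fun i => x₂ (r i))‖) := by
  haveI : NeZero n := ⟨by omega⟩
  have hns1 : 1 ≤ ns := by omega
  have hn0C : (n : ℂ) ≠ 0 := Nat.cast_ne_zero.mpr (by omega)
  -- the exponential in Sband matches dftc
  have hexp : ∀ j k : Fin n,
      ((Complex.exp (2 * Real.pi * Complex.I / n)) ^ ((j : ℕ) * (k : ℕ)))⁻¹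
        = Complex.exp (-(2 * (Real.pi : ℂ) * Complex.I * ((j : ℕ) : ℂ) * ((k : ℕ) : ℂ)) / n) := by
    intro j k
    rw [← Complex.exp_nat_mul, ← Complex.exp_neg]
    congr 1
    push_cast
    ring
  have hX0 : ∀ x ∈ Sband n ωs, ∀ k : Fin n, k ∉ Kset n ωs → dftc n x k = 0 := by
    intro x hx k hk
    have := hx k hk
    rw [← this]
    unfold dftc
    exact Finset.sum_congr rfl fun j _ => by rw [hexp j k]
  -- band hypothesis for the sampled sum
  have hband : ∀ x ∈ Sband n ωs, ∀ k k' : Fin n, dftc n x k ≠ 0 → dftc n x k' ≠ 0 →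
      ns ∣ ((k : ℕ) + (k' : ℕ)) → ((k : ℕ) + (k' : ℕ)) % n = 0 := by
    intro x hx k k' hk hk' hdv
    have hkK : k ∈ Kset n ωs := by
      by_contra h; exact hk (hX0 x hx k h)
    have hk'K : k' ∈ Kset n ωs := by
      by_contra h; exact hk' (hX0 x hx k' h)
    exact key_arith n ns ωs (k : ℕ) (k' : ℕ) hn hω hdvd hns k.isLt k'.isLt hkK hk'K hdv
  -- trivial band hypothesis for full sampling
  have hbandtriv : ∀ x : EuclideanSpace ℝ (Fin n), ∀ k k' : Fin n,
      dftc n x k ≠ 0 → dftc n x k' ≠ 0 →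
      n ∣ ((k : ℕ) + (k' : ℕ)) → ((k : ℕ) + (k' : ℕ)) % n = 0 := by
    intro x k k' _ _ h
    exact Nat.mod_eq_zero_of_dvd h
  -- energy identity over ℂ, then over ℝ
  have henergy : ∀ x ∈ Sband n ωs,
      ∑ i : Fin ns, (x (r i)) ^ 2 = ((ns : ℝ) / (n : ℝ)) * ∑ j : Fin n, (x j) ^ 2 := by
    intro x hx
    have h1 := sample_energy n ns hn hdvd hns1 r0 r hr x (hband x hx)
    have h2 := sample_energy n n hn dvd_rfl hn 0 id
      (fun i => by simp [Nat.div_self (show 0 < n by omega), Nat.mod_eq_of_lt i.isLt])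
      x (hbandtriv x)
    have h2' : ∑ j : Fin n, (x j : ℂ) ^ 2
        = ((n : ℂ) / (n : ℂ) ^ 2) * ∑ k : Fin n, dftc n x k * dftc n x (-k) := h2
    have hC : (∑ i : Fin ns, (x (r i) : ℂ) ^ 2)
        = ((ns : ℂ) / (n : ℂ)) * ∑ j : Fin n, (x j : ℂ) ^ 2 := by
      rw [h1, h2']
      field_simp
    rw [← Complex.ofReal_inj]
    push_cast
    exact hC
  constructor
  · exact henergy
  · intro x₁ hx₁ x₂ hx₂ hx₂0
    have hnormgen : ∀ x ∈ Sband n ωs,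
        ‖(WithLp.equiv 2 (Fin ns → ℝ)).symm (fun i => x (r i))‖
          = Real.sqrt ((ns : ℝ) / (n : ℝ)) * ‖x‖ := by
      intro x hx
      rw [EuclideanSpace.norm_eq, EuclideanSpace.norm_eq]
      simp only [WithLp.equiv_symm_apply, PiLp.toLp_apply, Real.norm_eq_abs, sq_abs]
      rw [henergy x hx, Real.sqrt_mul (by positivity)]
    rw [hnormgen x₁ hx₁, hnormgen x₂ hx₂]
    have hc : Real.sqrt ((ns : ℝ) / (n : ℝ)) ≠ 0 := by
      refine ne_of_gt (Real.sqrt_pos.mpr ?_)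
      positivity
    rw [mul_div_mul_left _ _ hc]
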